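/- Let a ∈ [0,1), let q, t ∈ [a,1], and let F, U : [0,1]²→[0,1] be nondecreasing in each variable such that F(x, U(q,t)) = U(F(x,q), F(x,t)) for all x ∈ [a,1] and the map x ↦ F(x, U(q,t)) is strictly increasing on [a,1]. If p, s, y' ∈ [a,1] satisfy U(F(y',q), F(y',t)) = U(F(p,q), F(s,t)), then min(p,s) ≤ y' ≤ max(p,s). Consequently, for every convex fuzzy truth value f, f(y') ∧ g(q) ∧ h(t) ≥ f(p) ∧ g(q) ∧ f(s) ∧ h(t) for all fuzzy truth values g, h (in particular f(y') ≥ min(f(p), f(s))). -/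
import Mathlib


open Set

/-- The extension of a binary operation `G` on `[0,1]` to fuzzy truth values:
`(f ⊙_G g)(z) = sup { min (f x) (g y) | x, y ∈ [0,1], G x y = z }` (with `sSup ∅ = 0` in `ℝ`). -/
noncomputable def extOp (G : ℝ → ℝ → ℝ) (f g : ℝ → ℝ) : ℝ → ℝ := fun z =>
  sSup {r : ℝ | ∃ x ∈ Icc (0:ℝ) 1, ∃ y ∈ Icc (0:ℝ) 1, G x y = z ∧ r = min (f x) (g y)}

/-- A fuzzy truth value: a map of `[0,1]` into itself. -/
def IsFTV (f : ℝ → ℝ) : Prop := ∀ x ∈ Icc (0:ℝ) 1, f x ∈ Icc (0:ℝ) 1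

/-- Convexity of a fuzzy truth value. -/
def ConvexFTV (f : ℝ → ℝ) : Prop :=
  ∀ x y z : ℝ, 0 ≤ x → x ≤ y → y ≤ z → z ≤ 1 → min (f x) (f z) ≤ f y

/-- `F` maps `[0,1]²` into `[0,1]`. -/
def MapsI (F : ℝ → ℝ → ℝ) : Prop :=
  ∀ x ∈ Icc (0:ℝ) 1, ∀ y ∈ Icc (0:ℝ) 1, F x y ∈ Icc (0:ℝ) 1

/-- `F` is nondecreasing in each variable on `[0,1]²`. -/
def MonoI (F : ℝ → ℝ → ℝ) : Prop :=
  ∀ x₁ x₂ y₁ y₂ : ℝ, x₁ ∈ Icc (0:ℝ) 1 → x₂ ∈ Icc (0:ℝ) 1 → y₁ ∈ Icc (0:ℝ) 1 →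
    y₂ ∈ Icc (0:ℝ) 1 → x₁ ≤ x₂ → y₁ ≤ y₂ → F x₁ y₁ ≤ F x₂ y₂

/-- `F` is continuous on `[0,1]²`. -/
def ContI (F : ℝ → ℝ → ℝ) : Prop :=
  ContinuousOn (fun p : ℝ × ℝ => F p.1 p.2) (Icc (0:ℝ) 1 ×ˢ Icc (0:ℝ) 1)

/-- `F` is commutative on `[0,1]²`. -/
def CommI (F : ℝ → ℝ → ℝ) : Prop := ∀ x ∈ Icc (0:ℝ) 1, ∀ y ∈ Icc (0:ℝ) 1, F x y = F y x

/-- `F` is associative on `[0,1]`. -/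
def AssocI (F : ℝ → ℝ → ℝ) : Prop :=
  ∀ x ∈ Icc (0:ℝ) 1, ∀ y ∈ Icc (0:ℝ) 1, ∀ z ∈ Icc (0:ℝ) 1, F (F x y) z = F x (F y z)

/-- Key lemma **A**: if `U(F(y',q), F(y',t)) = U(F(p,q), F(s,t))` and `x ↦ F(x, U(q,t))`
is strictly increasing on `[a,1]` while `F(x,U(q,t)) = U(F(x,q),F(x,t))` there, then
`y'` lies between `p` and `s`; consequently, for a convex fuzzy truth value `f`,
`f(p) ∧ g(q) ∧ f(s) ∧ h(t) ≤ f(y') ∧ g(q) ∧ h(t)` (in particular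
`min (f p) (f s) ≤ f y'`). -/
theorem between_of_strictMono_distrib (a : ℝ) (ha : a ∈ Ico (0:ℝ) 1)
    (q t : ℝ) (hq : q ∈ Icc a 1) (ht : t ∈ Icc a 1)
    (F U : ℝ → ℝ → ℝ) (hFmap : MapsI F) (hUmap : MapsI U)
    (hFmono : MonoI F) (hUmono : MonoI U)
    (hdist : ∀ x ∈ Icc a 1, F x (U q t) = U (F x q) (F x t))
    (hstrict : StrictMonoOn (fun x => F x (U q t)) (Icc a 1))
    (p s y' : ℝ) (hp : p ∈ Icc a 1) (hs : s ∈ Icc a 1) (hy' : y' ∈ Icc a 1)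
    (heq : U (F y' q) (F y' t) = U (F p q) (F s t)) :
    (min p s ≤ y' ∧ y' ≤ max p s) ∧
      ∀ f g h : ℝ → ℝ, IsFTV f → ConvexFTV f → IsFTV g → IsFTV h →
        min (f p) (min (g q) (min (f s) (h t))) ≤ min (f y') (min (g q) (h t)) ∧
        min (f p) (f s) ≤ f y' := by

  have hsub : Icc a 1 ⊆ Icc (0:ℝ) 1 := fun x hx => ⟨ha.1.trans hx.1, hx.2⟩
  have hq0 := hsub hq
  have ht0 := hsub ht
  have hp0 := hsub hp
  have hs0 := hsub hs
  have hy0 := hsub hy'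
  -- key: comparing via strict monotonicity
  have key : ∀ m M : ℝ, m ∈ Icc a 1 → M ∈ Icc a 1 →
      U (F m q) (F m t) ≤ U (F p q) (F s t) → U (F p q) (F s t) ≤ U (F M q) (F M t) →
      m ≤ y' ∧ y' ≤ M := by
    intro m M hm hM h1 h2
    rw [← heq] at h1 h2
    constructor
    · by_contra h
      push_neg at h
      have h3 : F y' (U q t) < F m (U q t) := hstrict hy' hm h
      rw [hdist _ hy', hdist _ hm] at h3
      linarith
    · by_contra h
      push_neg at h
      have h3 : F M (U q t) < F y' (U q t) := hstrict hM hy' h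
      rw [hdist _ hM, hdist _ hy'] at h3
      linarith
  have hm : min p s ∈ Icc a 1 := ⟨le_min hp.1 hs.1, (min_le_left _ _).trans hp.2⟩
  have hM : max p s ∈ Icc a 1 := ⟨hp.1.trans (le_max_left _ _), max_le hp.2 hs.2⟩
  have hm0 := hsub hm
  have hM0 := hsub hM
  have hb : min p s ≤ y' ∧ y' ≤ max p s := by
    apply key _ _ hm hM
    · exact hUmono _ _ _ _ (hFmap _ hm0 _ hq0) (hFmap _ hp0 _ hq0)
        (hFmap _ hm0 _ ht0) (hFmap _ hs0 _ ht0)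
        (hFmono _ _ _ _ hm0 hp0 hq0 hq0 (min_le_left _ _) le_rfl)
        (hFmono _ _ _ _ hm0 hs0 ht0 ht0 (min_le_right _ _) le_rfl)
    · exact hUmono _ _ _ _ (hFmap _ hp0 _ hq0) (hFmap _ hM0 _ hq0)
        (hFmap _ hs0 _ ht0) (hFmap _ hM0 _ ht0)
        (hFmono _ _ _ _ hp0 hM0 hq0 hq0 (le_max_left _ _) le_rfl)
        (hFmono _ _ _ _ hs0 hM0 ht0 ht0 (le_max_right _ _) le_rfl)
  refine ⟨hb, ?_⟩
  intro f g h _ hconv _ _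
  have hfy : min (f p) (f s) ≤ f y' := by
    have h1 : min (f (min p s)) (f (max p s)) ≤ f y' :=
      hconv _ _ _ hm0.1 hb.1 hb.2 hM0.2
    rcases le_total p s with hps | hps
    · rwa [min_eq_left hps, max_eq_right hps] at h1
    · rwa [min_eq_right hps, max_eq_left hps, min_comm] at h1
  have hle : min (f p) (min (g q) (min (f s) (h t))) ≤ min (f p) (f s) :=
    le_min (min_le_left _ _)
      ((min_le_right _ _).trans ((min_le_right _ _).trans (min_le_left _ _)))
  exact ⟨le_min (hle.trans hfy)
    (le_min ((min_le_right _ _).trans (min_le_left _ _))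
      ((min_le_right _ _).trans ((min_le_right _ _).trans (min_le_right _ _)))), hfy⟩
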